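/- arXiv:2403.15621 — 2 statements merged into one kernel-verified Lean document; each statement's English description precedes it below -/
import Mathlib

section
/- Suppose λ > 0, c_a - κ - λ·exp(-1) < θ < c_a - κ, and let n* and N be real numbers with 0 ≤ n* < N. Define the foraging probability p := (-ln((c_a - κ - θ)/λ) - n* - 1)/(N - n*) and the expected number of foraging robots E := N·p + n*·(1 - p). Then E = -ln((c_a - κ - θ)/λ) - 1 and π(E, θ) = 0; i.e., the mixed strategy in which each of the N - n* idle robots independently forages with probability p yields an expected number of foragers that satisfies the mixed-strategy Nash equilibrium condition. -/
/-- The marginal utility of foraging: `π(n, θ) = -c_a + κ + λ·exp(-(n+1)) + θ`. -/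
noncomputable def margUtil (c_a κ lam n θ : ℝ) : ℝ := -c_a + κ + lam * Real.exp (-(n + 1)) + θ

/-- Suppose `λ > 0`, `c_a - κ - λ·exp(-1) < θ < c_a - κ`, and `0 ≤ n* < N`. With the
foraging probability `p = (-ln((c_a - κ - θ)/λ) - n* - 1)/(N - n*)`, the expected
number of foragers `E = N·p + n*·(1 - p)` equals `-ln((c_a - κ - θ)/λ) - 1` and
satisfies the mixed-strategy Nash equilibrium condition `π(E, θ) = 0`. -/
theorem stmt11 (c_a κ lam θ nstar N : ℝ) (hlam : 0 < lam)
    (hθ₁ : c_a - κ - lam * Real.exp (-1) < θ) (hθ₂ : θ < c_a - κ)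
    (hn : 0 ≤ nstar) (hnN : nstar < N) :
    let p := (-Real.log ((c_a - κ - θ) / lam) - nstar - 1) / (N - nstar)
    let E := N * p + nstar * (1 - p)
    E = -Real.log ((c_a - κ - θ) / lam) - 1 ∧ margUtil c_a κ lam E θ = 0 := by
  intro p E
  have hne : N - nstar ≠ 0 := sub_ne_zero.mpr hnN.ne'
  have hE : E = -Real.log ((c_a - κ - θ) / lam) - 1 := by
    show N * p + nstar * (1 - p) = _
    have : N * p + nstar * (1 - p) = nstar + (N - nstar) * p := by ring
    rw [this]
    show nstar + (N - nstar) * ((-Real.log ((c_a - κ - θ) / lam) - nstar - 1) / (N - nstar)) = _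
    field_simp
    ring
  refine ⟨hE, ?_⟩
  have hpos : 0 < (c_a - κ - θ) / lam := div_pos (by linarith) hlam
  rw [hE]
  unfold margUtil
  have : -(-Real.log ((c_a - κ - θ) / lam) - 1 + 1) = Real.log ((c_a - κ - θ) / lam) := by ring
  rw [this, Real.exp_log hpos]
  field_simp
  ring
end

section
/- Suppose c_a - κ = 1 and λ = e·(c_a - κ) = e (i.e., Assumptions 1 and 2 hold with equality). Then for every θ with 0 < θ < 1 there exists a unique real n* ≥ 0 with π(n*, θ) = 0; for every θ ≥ 1, π(n, θ) > 0 for all real n ≥ 0; and for every θ ≤ 0, π(n, θ) ≤ 0 for all real n ≥ 0. In other words, the mixed-strategy Nash equilibrium exists exactly for signal values θ in the interval (0, 1). -/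
/-- Suppose `c_a - κ = 1` and `λ = e` (Assumptions 1 and 2 with equality). Then a
mixed-strategy Nash equilibrium (a unique `n* ≥ 0` with `π(n*, θ) = 0`) exists for
every `θ ∈ (0, 1)`; for `θ ≥ 1`, `π(n, θ) > 0` for all `n ≥ 0`; and for `θ ≤ 0`,
`π(n, θ) ≤ 0` for all `n ≥ 0`. -/
theorem stmt12 (c_a κ lam : ℝ) (h₁ : c_a - κ = 1) (h₂ : lam = Real.exp 1) :
    (∀ θ : ℝ, 0 < θ → θ < 1 → ∃! n : ℝ, 0 ≤ n ∧ margUtil c_a κ lam n θ = 0) ∧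
    (∀ θ : ℝ, 1 ≤ θ → ∀ n : ℝ, 0 ≤ n → margUtil c_a κ lam n θ > 0) ∧
    (∀ θ : ℝ, θ ≤ 0 → ∀ n : ℝ, 0 ≤ n → margUtil c_a κ lam n θ ≤ 0) := by
  have key : ∀ n θ : ℝ, margUtil c_a κ lam n θ = Real.exp (-n) - 1 + θ := by
    intro n θ
    have : Real.exp 1 * Real.exp (-(n + 1)) = Real.exp (-n) := by
      rw [← Real.exp_add]; ring_nf
    simp only [margUtil, h₂, this]
    linarith
  refine ⟨?_, ?_, ?_⟩
  · intro θ h0 h1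
    have hpos : 0 < 1 - θ := by linarith
    refine ⟨-Real.log (1 - θ), ⟨?_, ?_⟩, ?_⟩
    · have : Real.log (1 - θ) ≤ 0 := Real.log_nonpos (by linarith) (by linarith)
      linarith
    · rw [key, neg_neg, Real.exp_log hpos]; ring
    · rintro m ⟨-, hm⟩
      rw [key] at hm
      have : Real.exp (-m) = Real.exp (Real.log (1 - θ)) := by
        rw [Real.exp_log hpos]; linarith
      have := Real.exp_injective this
      linarith
  · intro θ hθ n hn
    have := Real.exp_pos (-n)
    rw [key]; linarith
  · intro θ hθ n hn
    have : Real.exp (-n) ≤ 1 := Real.exp_le_one_iff.mpr (by linarith)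
    rw [key]; linarith
end
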